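/- Let n, m ∈ ℕ, let a = (a_1, ..., a_n) : I → ℝ^n be an (m−1)-times continuously differentiable function, and let f : I → ℝ^n be a fundamental system of solutions of y^{(n)} = a_1 y^{(n-1)} + ... + a_n y. Define X_a := (a | e_1 | ... | e_{n-1}). Then for every k = (k_1, ..., k_n) ∈ ℕ₀^n with max(k_1, ..., k_n) ≤ m+n−1, setting ℓ_i := max(k_i − n + 1, 0) for i ∈ {1, ..., n}, one has on I: W_f^k = W_f · det( B_{ℓ_1}(X_a, ..., X_a^{(ℓ_1−1)}) e_{n+ℓ_1−k_1} | ... | B_{ℓ_n}(X_a, ..., X_a^{(ℓ_n−1)}) e_{n+ℓ_n−k_n} ). -/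

import Mathlib

open Matrix

/-- Noncommutative complete Bell polynomials: `B_0 = I_n`,
`B_{m+1}(X_1,…,X_{m+1}) = ∑_{j=0}^m C(m,j) B_j(X_1,…,X_j) X_{m+1-j}`.
Here `X : Fin m → _` with `X i` playing the role of `X_{i+1}`. -/
noncomputable def Bell {n : ℕ} :
    (m : ℕ) → (Fin m → Matrix (Fin n) (Fin n) ℝ) → Matrix (Fin n) (Fin n) ℝ
  | 0, _ => 1
  | m + 1, X => ∑ j : Fin (m + 1),
      (Nat.choose m (j : ℕ) : ℝ) •
        (Bell (j : ℕ) (fun i : Fin (j : ℕ) => X (Fin.castLE (by omega) i)) *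
          X ⟨m - (j : ℕ), by omega⟩)

/-- Entrywise `k`-th derivative (within `I`) of a matrix-valued function. -/
noncomputable def matD {n : ℕ} (I : Set ℝ) (X : ℝ → Matrix (Fin n) (Fin n) ℝ) (k : ℕ)
    (x : ℝ) : Matrix (Fin n) (Fin n) ℝ :=
  Matrix.of fun p q => iteratedDerivWithin k (fun t => X t p q) I x

/-- `B_j(X, X', …, X^{(j-1)})` evaluated at `x` (derivatives within `I`). -/
noncomputable def BellD {n : ℕ} (I : Set ℝ) (X : ℝ → Matrix (Fin n) (Fin n) ℝ) (j : ℕ)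
    (x : ℝ) : Matrix (Fin n) (Fin n) ℝ :=
  Bell j (fun i : Fin j => matD I X (i : ℕ) x)

/-- Generalized Wronskian `W_f^k = det(f^{(k_1)} | … | f^{(k_n)})` (derivatives within `I`). -/
noncomputable def genW {n : ℕ} (I : Set ℝ) (f : ℝ → Fin n → ℝ) (k : Fin n → ℕ) (x : ℝ) : ℝ :=
  Matrix.det (Matrix.of fun p q => iteratedDerivWithin (k q) (fun t => f t p) I x)

/-- The multi-index `(n-1, n-2, …, 1, 0)` of the ordinary Wronskian. -/
def wIdx (n : ℕ) : Fin n → ℕ := fun q => n - 1 - (q : ℕ)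

/-- The multi-index `(n+d, n-1, …, j+1, j-1, …, 1, 0)`. -/
def dIdx (n d j : ℕ) : Fin n → ℕ :=
  fun q => if (q : ℕ) = 0 then n + d
    else if j < n - (q : ℕ) then n - (q : ℕ) else n - (q : ℕ) - 1

/-- `Φ_f^{[j]} = (-1)^{n-j-1} W_f^{(n,n-1,…,j+1,j-1,…,0)} / W_f`. -/
noncomputable def Phi {n : ℕ} (I : Set ℝ) (f : ℝ → Fin n → ℝ) (j : ℕ) (x : ℝ) : ℝ :=
  (-1 : ℝ) ^ (n - j - 1) * genW I f (dIdx n 0 j) x / genW I f (wIdx n) x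

/-- The `1`-indexed standard basis vector `e_i` of `ℝ^n`. -/
def stdB (n i : ℕ) : Fin n → ℝ := fun p => if (p : ℕ) + 1 = i then 1 else 0

/-- The matrix `X_a = (a | e_1 | … | e_{n-1})`. -/
def colMat {n : ℕ} (a : ℝ → Fin n → ℝ) (x : ℝ) : Matrix (Fin n) (Fin n) ℝ :=
  Matrix.of fun p q =>
    if (q : ℕ) = 0 then a x p else if (p : ℕ) + 1 = (q : ℕ) then 1 else 0

/-- The matrix `Y_f = (f^{(n-1)} | … | f' | f)` (derivatives within `I`). -/
noncomputable def Yfun {n : ℕ} (I : Set ℝ) (f : ℝ → Fin n → ℝ) (x : ℝ) :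
    Matrix (Fin n) (Fin n) ℝ :=
  Matrix.of fun p q => iteratedDerivWithin (n - 1 - (q : ℕ)) (fun t => f t p) I x

/-- The `1`-indexed component `a_i` of `a : I → ℝ^n`, with `a_i := 0` for `i > n`. -/
noncomputable def aExt {n : ℕ} (a : ℝ → Fin n → ℝ) (i : ℕ) : ℝ → ℝ :=
  fun t => if h : i - 1 < n then a t ⟨i - 1, h⟩ else 0

/-- `y` is an `n`-times differentiable (on `I`) solution of
`y^{(n)} = a_1 y^{(n-1)} + ⋯ + a_n y`, where `a i` is `a_{i+1}`. -/
def SolvesDE {n : ℕ} (I : Set ℝ) (a : ℝ → Fin n → ℝ) (y : ℝ → ℝ) : Prop :=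
  (∀ k < n, DifferentiableOn ℝ (iteratedDerivWithin k y I) I) ∧
    ∀ x ∈ I, iteratedDerivWithin n y I x =
      ∑ i : Fin n, a x i * iteratedDerivWithin (n - 1 - (i : ℕ)) y I x

/-- `f : I → ℝ^n` is a fundamental system of solutions of
`y^{(n)} = a_1 y^{(n-1)} + ⋯ + a_n y`: each component solves the equation and the
components are linearly independent functions on `I`. -/
def FundSystem {n : ℕ} (I : Set ℝ) (a : ℝ → Fin n → ℝ) (f : ℝ → Fin n → ℝ) : Prop :=
  (∀ p : Fin n, SolvesDE I a fun t => f t p) ∧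
    LinearIndependent ℝ fun p : Fin n => I.restrict fun t => f t p

section Helpers

theorem iterDW_comp {f : ℝ → ℝ} {I : Set ℝ} (hU : UniqueDiffOn ℝ I) (j k : ℕ) :
    ∀ x ∈ I, iteratedDerivWithin k (iteratedDerivWithin j f I) I x
      = iteratedDerivWithin (j + k) f I x := by
  induction k with
  | zero => intro x hx; simp
  | succ k ih =>
    intro x hx
    rw [iteratedDerivWithin_succ, show j + (k+1) = (j+k)+1 from rfl,
      iteratedDerivWithin_succ]
    exact derivWithin_congr (fun y hy => ih y hy) (ih x hx)

theorem iterDW_zero_fun {I : Set ℝ} (hU : UniqueDiffOn ℝ I) (ℓ : ℕ) {x : ℝ} (hx : x ∈ I) :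
    iteratedDerivWithin ℓ (fun _ : ℝ => (0:ℝ)) I x = 0 := by
  rw [iteratedDerivWithin_eq_iteratedFDerivWithin, iteratedFDerivWithin_zero_fun]
  simp

theorem iterDW_sum {I : Set ℝ} (hU : UniqueDiffOn ℝ I) {ι : Type*} [DecidableEq ι] (s : Finset ι)
    (F : ι → ℝ → ℝ) (ℓ : ℕ) (hF : ∀ i ∈ s, ContDiffOn ℝ ℓ (F i) I) :
    ∀ x ∈ I, iteratedDerivWithin ℓ (fun t => ∑ i ∈ s, F i t) I x
      = ∑ i ∈ s, iteratedDerivWithin ℓ (F i) I x := by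
  induction s using Finset.induction with
  | empty => intro x hx; simpa using iterDW_zero_fun hU ℓ hx
  | @insert a s ha ih =>
    intro x hx
    have h1 : ContDiffOn ℝ ℓ (F a) I := hF a (Finset.mem_insert_self a s)
    have h2 : ContDiffOn ℝ ℓ (fun t => ∑ i ∈ s, F i t) I :=
      ContDiffOn.sum fun i hi => hF i (Finset.mem_insert_of_mem hi)
    simp only [Finset.sum_insert ha]
    rw [show (fun t => F a t + ∑ i ∈ s, F i t) = (F a + fun t => ∑ i ∈ s, F i t) from rfl]
    rw [iteratedDerivWithin_add hx hU (h1 x hx) (h2 x hx),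
      ih (fun i hi => hF i (Finset.mem_insert_of_mem hi)) x hx]

theorem pascal_sum (ℓ : ℕ) (F G : ℕ → ℝ) :
    ∑ j ∈ Finset.range (ℓ+1), (ℓ.choose j : ℝ) * (F (j+1) * G (ℓ-j) + F j * G (ℓ-j+1))
      = ∑ j ∈ Finset.range (ℓ+2), ((ℓ+1).choose j : ℝ) * (F j * G (ℓ+1-j)) := by
  have key : ∀ j ∈ Finset.range (ℓ+1), (ℓ.choose j : ℝ) * (F (j+1) * G (ℓ-j) + F j * G (ℓ-j+1))
      = (ℓ.choose j : ℝ) * (F (j+1) * G (ℓ-j)) + (ℓ.choose j : ℝ) * (F j * G (ℓ+1-j)) := by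
    intro j hj
    rw [Finset.mem_range] at hj
    rw [show ℓ - j + 1 = ℓ + 1 - j by omega]
    ring
  rw [Finset.sum_congr rfl key, Finset.sum_add_distrib]
  rw [Finset.sum_range_succ' (fun j => ((ℓ+1).choose j : ℝ) * (F j * G (ℓ+1-j))) (ℓ+1)]
  have e1 : ∀ j ∈ Finset.range (ℓ+1), ((ℓ+1).choose (j+1) : ℝ) * (F (j+1) * G (ℓ+1-(j+1)))
      = (ℓ.choose j : ℝ) * (F (j+1) * G (ℓ-j)) + (ℓ.choose (j+1) : ℝ) * (F (j+1) * G (ℓ-j)) := by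
    intro j _
    rw [Nat.choose_succ_succ, show ℓ+1-(j+1) = ℓ - j by omega]
    push_cast; ring
  rw [Finset.sum_congr rfl e1, Finset.sum_add_distrib]
  have e2 : ∑ j ∈ Finset.range (ℓ+1), (ℓ.choose j : ℝ) * (F j * G (ℓ+1-j))
      = ∑ j ∈ Finset.range ℓ, (ℓ.choose (j+1) : ℝ) * (F (j+1) * G (ℓ-j))
        + (ℓ.choose 0 : ℝ) * (F 0 * G (ℓ+1)) := by
    rw [Finset.sum_range_succ' (fun j => (ℓ.choose j : ℝ) * (F j * G (ℓ+1-j))) ℓ]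
    congr 1
    refine Finset.sum_congr rfl fun j _ => ?_
    rw [show ℓ+1-(j+1) = ℓ - j by omega]
  have e3 : ∑ j ∈ Finset.range (ℓ+1), (ℓ.choose (j+1) : ℝ) * (F (j+1) * G (ℓ-j))
      = ∑ j ∈ Finset.range ℓ, (ℓ.choose (j+1) : ℝ) * (F (j+1) * G (ℓ-j)) := by
    rw [Finset.sum_range_succ]
    simp [Nat.choose_succ_self]
  rw [e2, e3]
  simp
  ring

theorem iterDW_leibniz {I : Set ℝ} (hU : UniqueDiffOn ℝ I) (ℓ : ℕ) :
    ∀ (f g : ℝ → ℝ), ContDiffOn ℝ ℓ f I → ContDiffOn ℝ ℓ g I → ∀ x ∈ I,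
    iteratedDerivWithin ℓ (fun t => f t * g t) I x
      = ∑ j ∈ Finset.range (ℓ+1), (ℓ.choose j : ℝ)
          * (iteratedDerivWithin j f I x * iteratedDerivWithin (ℓ-j) g I x) := by
  induction ℓ with
  | zero => intro f g _ _ x hx; simp
  | succ ℓ ih =>
    intro f g hf hg x hx
    have hle : (ℓ : WithTop ℕ∞) ≤ (ℓ+1 : ℕ) := by exact_mod_cast Nat.cast_le.mpr (Nat.le_succ ℓ)
    have hf' : ContDiffOn ℝ ℓ f I := hf.of_le hle
    have hg' : ContDiffOn ℝ ℓ g I := hg.of_le hle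
    have hdf : ∀ j : ℕ, j ≤ ℓ → DifferentiableOn ℝ (iteratedDerivWithin j f I) I := by
      intro j hj
      exact hf.differentiableOn_iteratedDerivWithin (by exact_mod_cast Nat.lt_succ_of_le hj) hU
    have hdg : ∀ j : ℕ, j ≤ ℓ → DifferentiableOn ℝ (iteratedDerivWithin j g I) I := by
      intro j hj
      exact hg.differentiableOn_iteratedDerivWithin (by exact_mod_cast Nat.lt_succ_of_le hj) hU
    rw [iteratedDerivWithin_succ]
    have hcong : Set.EqOn (iteratedDerivWithin ℓ (fun t => f t * g t) I)
        (fun y => ∑ j ∈ Finset.range (ℓ+1), (ℓ.choose j : ℝ)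
          * (iteratedDerivWithin j f I y * iteratedDerivWithin (ℓ-j) g I y)) I :=
      fun y hy => ih f g hf' hg' y hy
    rw [derivWithin_congr hcong (hcong hx)]
    rw [derivWithin_fun_sum (fun j hj => by
      rw [Finset.mem_range] at hj
      refine DifferentiableWithinAt.const_mul ?_ _
      exact ((hdf j (by omega) x hx).mul (hdg (ℓ-j) (by omega) x hx)))]
    have hterm : ∀ j ∈ Finset.range (ℓ+1),
        derivWithin (fun y => (ℓ.choose j : ℝ)
          * (iteratedDerivWithin j f I y * iteratedDerivWithin (ℓ-j) g I y)) I x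
        = (ℓ.choose j : ℝ) * (iteratedDerivWithin (j+1) f I x * iteratedDerivWithin (ℓ-j) g I x
            + iteratedDerivWithin j f I x * iteratedDerivWithin (ℓ-j+1) g I x) := by
      intro j hj
      rw [Finset.mem_range] at hj
      rw [derivWithin_const_mul _
        ((hdf j (by omega) x hx).fun_mul (hdg (ℓ-j) (by omega) x hx)),
        derivWithin_fun_mul (hdf j (by omega) x hx) (hdg (ℓ-j) (by omega) x hx),
        ← iteratedDerivWithin_succ, ← iteratedDerivWithin_succ]
    rw [Finset.sum_congr rfl hterm]
    exact pascal_sum ℓ (fun j => iteratedDerivWithin j f I x)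
      (fun j => iteratedDerivWithin j g I x)

theorem contDiffOn_iterDW {I : Set ℝ} (hU : UniqueDiffOn ℝ I) {y : ℝ → ℝ} :
    ∀ (j : ℕ) {N N' : ℕ}, ContDiffOn ℝ N y I → j + N' ≤ N →
    ContDiffOn ℝ N' (iteratedDerivWithin j y I) I := by
  intro j
  induction j with
  | zero =>
    intro N N' hy h
    simpa [iteratedDerivWithin_zero] using
      hy.of_le (show ((N':ℕ) : WithTop ℕ∞) ≤ (N:ℕ) from Nat.cast_le.mpr (by omega))
  | succ j ih =>
    intro N N' hy h
    have h1 : ContDiffOn ℝ ((N'+1 : ℕ)) (iteratedDerivWithin j y I) I := ih hy (by omega)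
    have h2 : ContDiffOn ℝ N' (derivWithin (iteratedDerivWithin j y I) I) I := by
      refine h1.derivWithin hU ?_
      push_cast
      exact le_refl _
    exact h2.congr fun x hx => by rw [iteratedDerivWithin_succ]

theorem contDiffOn_of_iterDW {I : Set ℝ} (hU : UniqueDiffOn ℝ I) :
    ∀ (j : ℕ) (N : ℕ) (y : ℝ → ℝ),
    (∀ i < j, DifferentiableOn ℝ (iteratedDerivWithin i y I) I) →
    ContDiffOn ℝ N (iteratedDerivWithin j y I) I →
    ContDiffOn ℝ ((j + N : ℕ)) y I := by
  intro j
  induction j with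
  | zero => intro N y _ hC; simpa [iteratedDerivWithin_zero] using hC
  | succ j ih =>
    intro N y hdiff hC
    have hdy : DifferentiableOn ℝ y I := by simpa using hdiff 0 (by omega)
    set y₁ := derivWithin y I with hy₁
    have hEq : ∀ i : ℕ, Set.EqOn (iteratedDerivWithin (i+1) y I) (iteratedDerivWithin i y₁ I) I :=
      fun i x hx => by rw [iteratedDerivWithin_succ']
    have hdiff' : ∀ i < j, DifferentiableOn ℝ (iteratedDerivWithin i y₁ I) I := by
      intro i hi
      exact (hdiff (i+1) (by omega)).congr fun x hx => (hEq i hx).symm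
    have hC' : ContDiffOn ℝ N (iteratedDerivWithin j y₁ I) I :=
      hC.congr fun x hx => (hEq j hx).symm
    have h1 : ContDiffOn ℝ ((j + N : ℕ)) y₁ I := ih N y₁ hdiff' hC'
    have h2 : ContDiffOn ℝ (((j + N : ℕ) : WithTop ℕ∞) + 1) y I := by
      rw [contDiffOn_succ_iff_derivWithin hU]
      exact ⟨hdy, fun hω => absurd hω (WithTop.natCast_ne_top _), h1⟩
    have he : ((j + 1 + N : ℕ) : WithTop ℕ∞) = ((j + N : ℕ) : WithTop ℕ∞) + 1 := by
      push_cast; ring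
    rw [he]
    exact h2

theorem sol_reg {n m : ℕ} (hn : 0 < n) (hm : 0 < m) {I : Set ℝ} (hU : UniqueDiffOn ℝ I)
    (a : ℝ → Fin n → ℝ)
    (ha : ∀ i : Fin n, ContDiffOn ℝ ((m - 1 : ℕ)) (fun t => a t i) I)
    {y : ℝ → ℝ} (hy : SolvesDE I a y) :
    ContDiffOn ℝ ((n + m - 1 : ℕ)) y I := by
  obtain ⟨hdiff, hode⟩ := hy
  have hEq : Set.EqOn (iteratedDerivWithin n y I)
      (fun t => ∑ i : Fin n, a t i * iteratedDerivWithin (n-1-(i:ℕ)) y I t) I :=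
    fun x hx => hode x hx
  have key : ∀ r : ℕ, r ≤ m - 1 → ContDiffOn ℝ ((n + r : ℕ)) y I := by
    intro r
    induction r with
    | zero =>
      intro _
      have hcont : ContinuousOn (iteratedDerivWithin n y I) I := by
        refine ContinuousOn.congr ?_ hEq
        refine continuousOn_finset_sum _ fun i _ => ContinuousOn.mul (ha i).continuousOn ?_
        exact (hdiff (n-1-(i:ℕ)) (by omega)).continuousOn
      have h0 : ContDiffOn ℝ ((0:ℕ)) (iteratedDerivWithin n y I) I := by
        rwa [show ((0:ℕ) : WithTop ℕ∞) = 0 by norm_cast, contDiffOn_zero]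
      simpa using contDiffOn_of_iterDW hU n 0 y (fun i hi => hdiff i hi) h0
    | succ r ih =>
      intro hr1
      have hyr : ContDiffOn ℝ ((n + r : ℕ)) y I := ih (by omega)
      have hg : ContDiffOn ℝ ((r+1 : ℕ))
          (fun t => ∑ i : Fin n, a t i * iteratedDerivWithin (n-1-(i:ℕ)) y I t) I := by
        refine ContDiffOn.sum fun i _ => ContDiffOn.mul
          ((ha i).of_le (Nat.cast_le.mpr (by omega))) ?_
        exact contDiffOn_iterDW hU (n-1-(i:ℕ)) hyr (by omega)
      have hC : ContDiffOn ℝ ((r+1 : ℕ)) (iteratedDerivWithin n y I) I :=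
        hg.congr fun x hx => hEq hx
      exact contDiffOn_of_iterDW hU n (r+1) y (fun i hi => hdiff i hi) hC
  have h1 := key (m-1) le_rfl
  rwa [show n + (m-1) = n + m - 1 by omega] at h1

theorem Yfun_deriv {n : ℕ} (hn : 0 < n) {I : Set ℝ} (hU : UniqueDiffOn ℝ I)
    (a f : ℝ → Fin n → ℝ) (hf : ∀ p, SolvesDE I a fun t => f t p) (p q : Fin n) :
    ∀ x ∈ I, derivWithin (fun t => Yfun I f t p q) I x
      = ∑ r : Fin n, Yfun I f x p r * colMat a x r q := by
  intro x hx
  have hL : derivWithin (fun t => Yfun I f t p q) I x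
      = iteratedDerivWithin ((n-1-(q:ℕ))+1) (fun t => f t p) I x := by
    rw [iteratedDerivWithin_succ]
    rfl
  rw [hL]
  by_cases hq : (q:ℕ) = 0
  · rw [show (n-1-(q:ℕ))+1 = n by omega]
    rw [(hf p).2 x hx]
    refine Finset.sum_congr rfl fun r _ => ?_
    simp only [Yfun, colMat, Matrix.of_apply, if_pos hq]
    ring
  · have hqn : (q:ℕ) < n := q.isLt
    have hval : ∑ r : Fin n, Yfun I f x p r * colMat a x r q
        = Yfun I f x p ⟨(q:ℕ)-1, by omega⟩ := by
      rw [Finset.sum_eq_single (⟨(q:ℕ)-1, by omega⟩ : Fin n)]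
      · have hcond : ((⟨(q:ℕ)-1, by omega⟩ : Fin n) : ℕ) + 1 = (q:ℕ) := by simp; omega
        simp only [colMat, Matrix.of_apply, if_neg hq, if_pos hcond, mul_one]
      · intro r _ hr
        have hcon : ¬ ((r:ℕ)+1 = (q:ℕ)) := by
          intro hcon; apply hr; apply Fin.ext; simp; omega
        simp only [colMat, Matrix.of_apply, if_neg hq, if_neg hcon, mul_zero]
      · intro h; exact absurd (Finset.mem_univ _) h
    rw [hval]
    show _ = iteratedDerivWithin (n-1-((q:ℕ)-1)) (fun t => f t p) I x
    rw [show (n-1-(q:ℕ))+1 = n-1-((q:ℕ)-1) by omega]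

theorem matD_Y {n m : ℕ} (hn : 0 < n) (hm : 0 < m) {I : Set ℝ} (hIo : IsOpen I)
    (a f : ℝ → Fin n → ℝ)
    (ha : ∀ i : Fin n, ContDiffOn ℝ ((m-1:ℕ)) (fun t => a t i) I)
    (hf : ∀ p, SolvesDE I a fun t => f t p) :
    ∀ ℓ : ℕ, ℓ ≤ m → ∀ x ∈ I,
      matD I (Yfun I f) ℓ x = Yfun I f x * BellD I (colMat a) ℓ x := by
  have hU : UniqueDiffOn ℝ I := hIo.uniqueDiffOn
  have hreg : ∀ p : Fin n, ContDiffOn ℝ ((n+m-1:ℕ)) (fun t => f t p) I :=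
    fun p => sol_reg hn hm hU a ha (hf p)
  have hYsm : ∀ (p r : Fin n) (ℓ : ℕ), ℓ ≤ m →
      ContDiffOn ℝ (ℓ:ℕ) (fun t => Yfun I f t p r) I := by
    intro p r ℓ hℓ
    exact contDiffOn_iterDW hU (n-1-(r:ℕ)) (hreg p) (by omega)
  have hXsm : ∀ (r q : Fin n) (ℓ : ℕ), ℓ ≤ m - 1 →
      ContDiffOn ℝ (ℓ:ℕ) (fun t => colMat a t r q) I := by
    intro r q ℓ hℓ
    by_cases hq : (q:ℕ) = 0
    · simp only [colMat, Matrix.of_apply, if_pos hq]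
      exact (ha r).of_le (Nat.cast_le.mpr hℓ)
    · simp only [colMat, Matrix.of_apply, if_neg hq]
      exact contDiffOn_const
  intro ℓ
  induction ℓ using Nat.strong_induction_on with
  | _ ℓ ih =>
    intro hℓ x hx
    match ℓ, hℓ, ih with
    | 0, hℓ, ih =>
      ext p q
      show iteratedDerivWithin 0 (fun t => Yfun I f t p q) I x = _
      rw [iteratedDerivWithin_zero]
      simp [BellD, Bell]
    | (ℓ+1), hℓ, ih =>
      ext p q
      show iteratedDerivWithin (ℓ+1) (fun t => Yfun I f t p q) I x = _
      rw [iteratedDerivWithin_succ']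
      have hEq : Set.EqOn (derivWithin (fun t => Yfun I f t p q) I)
          (fun t => ∑ r : Fin n, Yfun I f t p r * colMat a t r q) I :=
        fun y hy => Yfun_deriv hn hU a f hf p q y hy
      rw [iteratedDerivWithin_congr hEq hx]
      rw [iterDW_sum hU Finset.univ (fun r => fun t => Yfun I f t p r * colMat a t r q) ℓ
        (fun r _ => ((hYsm p r ℓ (by omega)).mul (hXsm r q ℓ (by omega)))) x hx]
      have hterm : ∀ r : Fin n, r ∈ (Finset.univ : Finset (Fin n)) →
          iteratedDerivWithin ℓ (fun t => Yfun I f t p r * colMat a t r q) I x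
          = ∑ j ∈ Finset.range (ℓ+1), (ℓ.choose j : ℝ)
              * ((Yfun I f x * BellD I (colMat a) j x) p r
                * matD I (colMat a) (ℓ-j) x r q) := by
        intro r _
        rw [iterDW_leibniz hU ℓ _ _ (hYsm p r ℓ (by omega)) (hXsm r q ℓ (by omega)) x hx]
        refine Finset.sum_congr rfl fun j hj => ?_
        rw [Finset.mem_range] at hj
        have h1 : iteratedDerivWithin j (fun t => Yfun I f t p r) I x
            = (Yfun I f x * BellD I (colMat a) j x) p r := by
          have h2 := ih j (by omega) (by omega) x hx
          exact congrFun (congrFun h2 p) r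
        rw [h1]
        rfl
      rw [Finset.sum_congr rfl hterm, Finset.sum_comm]
      have hBell : BellD I (colMat a) (ℓ+1) x
          = ∑ j : Fin (ℓ+1), ((ℓ.choose (j:ℕ) : ℝ))
              • (BellD I (colMat a) (j:ℕ) x * matD I (colMat a) (ℓ-(j:ℕ)) x) := by
        simp only [BellD]
        rw [Bell]
        rfl
      rw [hBell, Matrix.mul_sum]
      rw [Matrix.sum_apply]
      rw [← Fin.sum_univ_eq_sum_range (fun j => ∑ r : Fin n, (ℓ.choose j : ℝ)
        * ((Yfun I f x * BellD I (colMat a) j x) p r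
          * matD I (colMat a) (ℓ-j) x r q)) (ℓ+1)]
      refine Finset.sum_congr rfl fun j _ => ?_
      rw [Matrix.mul_smul, Matrix.smul_apply, ← Matrix.mul_assoc, Matrix.mul_apply,
        smul_eq_mul, Finset.mul_sum]


theorem mulVec_stdB {n : ℕ} (A : Matrix (Fin n) (Fin n) ℝ) (i : ℕ) (s₀ : Fin n)
    (h : (s₀:ℕ)+1 = i) (p : Fin n) : A.mulVec (stdB n i) p = A p s₀ := by
  unfold Matrix.mulVec dotProduct stdB
  rw [Finset.sum_eq_single s₀]
  · rw [if_pos h, mul_one]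
  · intro r _ hr
    rw [if_neg, mul_zero]
    intro hc
    exact hr (Fin.ext (by omega))
  · intro hmem; exact absurd (Finset.mem_univ _) hmem

end Helpers
/-- the generalized Wronskian formula
`W_f^k = W_f · det(B_{ℓ_1}(X_a,…) e_{n+ℓ_1-k_1} | … | B_{ℓ_n}(X_a,…) e_{n+ℓ_n-k_n})`
on `I`, where `ℓ_i = max(k_i-n+1, 0)` and `max k_i ≤ m+n-1`. -/
theorem stmt_5 (n m : ℕ) (hn : 0 < n) (hm : 0 < m) (I : Set ℝ) (hIo : IsOpen I)
    (hIne : I.Nonempty) (hIc : I.OrdConnected) (a f : ℝ → Fin n → ℝ)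
    (ha : ∀ i : Fin n, ContDiffOn ℝ ((m - 1 : ℕ) : ℕ∞) (fun t => a t i) I)
    (hf : FundSystem I a f) :
    ∀ k : Fin n → ℕ, (∀ q, k q ≤ m + n - 1) → ∀ x ∈ I,
      genW I f k x = genW I f (wIdx n) x *
        Matrix.det (Matrix.of fun p q =>
          (BellD I (colMat a) (k q + 1 - n) x).mulVec
            (stdB n (n + (k q + 1 - n) - k q)) p) := by
  intro k hk x hx
  have hU : UniqueDiffOn ℝ I := hIo.uniqueDiffOn
  have ha' : ∀ i : Fin n, ContDiffOn ℝ ((m-1:ℕ)) (fun t => a t i) I := by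
    intro i
    exact_mod_cast ha i
  have hmain := matD_Y hn hm hIo a f ha' hf.1
  have hfac : (Matrix.of fun p q => iteratedDerivWithin (k q) (fun t => f t p) I x)
      = Yfun I f x * (Matrix.of fun p q =>
          (BellD I (colMat a) (k q + 1 - n) x).mulVec
            (stdB n (n + (k q + 1 - n) - k q)) p) := by
    ext p q
    have hℓm : k q + 1 - n ≤ m := by have := hk q; omega
    have hs₀ : n + (k q + 1 - n) - k q - 1 < n := by omega
    set ℓ : ℕ := k q + 1 - n with hℓdef
    set s₀ : Fin n := ⟨n + ℓ - k q - 1, hs₀⟩ with hs₀def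
    have hR : (Yfun I f x * Matrix.of (fun p' q' => (BellD I (colMat a) (k q' + 1 - n) x).mulVec
          (stdB n (n + (k q' + 1 - n) - k q')) p')) p q
        = (Yfun I f x * BellD I (colMat a) ℓ x) p s₀ := by
      rw [Matrix.mul_apply]
      have hstep : ∀ j : Fin n,
          (Matrix.of (fun p' q' => (BellD I (colMat a) (k q' + 1 - n) x).mulVec
            (stdB n (n + (k q' + 1 - n) - k q')) p')) j q
          = (BellD I (colMat a) ℓ x).mulVec (stdB n (n + ℓ - k q)) j := fun j => rfl
      simp only [hstep]
      have : ∑ j : Fin n, Yfun I f x p j * (BellD I (colMat a) ℓ x).mulVec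
            (stdB n (n + ℓ - k q)) j
          = (Yfun I f x).mulVec ((BellD I (colMat a) ℓ x).mulVec (stdB n (n + ℓ - k q))) p := rfl
      rw [this, Matrix.mulVec_mulVec]
      exact mulVec_stdB _ _ s₀ (show n + ℓ - k q - 1 + 1 = n + ℓ - k q by omega) p
    rw [show (Matrix.of fun p' q' => iteratedDerivWithin (k q') (fun t => f t p') I x) p q
        = iteratedDerivWithin (k q) (fun t => f t p) I x from rfl, hR, ← hmain ℓ hℓm x hx]
    show iteratedDerivWithin (k q) (fun t => f t p) I x
        = iteratedDerivWithin ℓ (fun t => Yfun I f t p s₀) I x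
    have hYent : (fun t => Yfun I f t p s₀)
        = iteratedDerivWithin (n - 1 - (s₀:ℕ)) (fun t => f t p) I := rfl
    rw [hYent, iterDW_comp hU (n - 1 - (s₀:ℕ)) ℓ x hx,
      show n - 1 - (s₀:ℕ) + ℓ = k q by simp only [hs₀def]; omega]
  rw [genW, hfac, Matrix.det_mul]
  congr 1
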